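/- arXiv:1306.3776 — 3 statements merged into one kernel-verified Lean document; each statement's English description precedes it below -/
import Mathlib

section
/- Let u_θ be the diagonal unitary on ℓ²(ℕ) with u_θ eₙ = θⁿ eₙ for |θ|=1, and v_θ = diag(1, θ̄) on ℂ². If ψ_θ := ψ(v_θ* · v_θ), then for every bounded operator x on ℓ²(ℕ), T_{ψ_θ}(x) = u_θ T_ψ(u_θ* x u_θ) u_θ*; in particular T_ψ and T_{ψ_θ} are unitarily conjugate. -/
noncomputable section
open ContinuousLinearMap
open scoped ComplexOrder

abbrev H : Type := lp (fun _ : ℕ => ℂ) 2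

def e (n : ℕ) : H := lp.single 2 n 1

open scoped InnerProductSpace in
lemma inner_e_left (n : ℕ) (v : H) : ⟪e n, v⟫_ℂ = v n := by
  simp [e, lp.inner_single_left]

lemma dense_span_e : Dense (Submodule.span ℂ (Set.range e) : Set H) := by
  intro f
  have h := (lp.hasSum_single ENNReal.ofNat_ne_top f).tendsto_sum_nat
  refine mem_closure_of_tendsto h (Filter.Eventually.of_forall fun t => ?_)
  refine Submodule.sum_mem _ fun i _ => ?_
  have : lp.single (E := fun _ : ℕ => ℂ) 2 i (f i) = f i • e i := by
    rw [e, ← lp.single_smul]; norm_num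
  rw [this]
  exact Submodule.smul_mem _ _ (Submodule.subset_span ⟨i, rfl⟩)

lemma ext_e {F : Type*} [NormedAddCommGroup F] [NormedSpace ℂ F]
    {f g : H →L[ℂ] F} (h : ∀ n, f (e n) = g (e n)) : f = g :=
  ContinuousLinearMap.ext_on dense_span_e (by rintro _ ⟨n, rfl⟩; exact h n)

open scoped InnerProductSpace in
lemma vext {v w : H} (h : ∀ n, ⟪v, e n⟫_ℂ = ⟪w, e n⟫_ℂ) : v = w := by
  have h2 : (innerSL ℂ v : H →L[ℂ] ℂ) = innerSL ℂ w := ext_e fun n => h n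
  exact ext_inner_right ℂ fun y => by
    have := congrArg (fun f : H →L[ℂ] ℂ => f y) h2
    simpa using this

open scoped InnerProductSpace in
lemma inner_e_e (n m : ℕ) : ⟪e n, e m⟫_ℂ = if m = n then 1 else 0 := by
  rw [inner_e_left, e, lp.single_apply]
  by_cases h : m = n
  · subst h; simp
  · simp [h, Ne.symm h]

/-- The transition operator T_ψ(x) = P_ψ(u*(x⊗1)u), where the state ψ on M₂ has density
matrix ρ (so that ψ(y) = Tr(ρ y)) and the slice map satisfies P_ψ(x ⊗ Eᵢⱼ) = ρ j i • x. -/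
def transOp (u : Matrix (Fin 2) (Fin 2) (H →L[ℂ] H)) (ρ : Matrix (Fin 2) (Fin 2) ℂ)
    (x : H →L[ℂ] H) : H →L[ℂ] H :=
  ∑ i : Fin 2, ∑ j : Fin 2, ρ j i • ((u.conjTranspose * !![x, 0; 0, x] * u) i j)

open scoped InnerProductSpace

section Body

variable (α β : ℕ → ℝ)
    (s a b : H →L[ℂ] H)
    (hs : ∀ n, s (e n) = e (n + 1))
    (ha : ∀ n, a (e n) = (α n : ℂ) • e n)
    (hb : ∀ n, b (e n) = (β n : ℂ) • e n)
    (θ : ℂ) (hθ : ‖θ‖ = 1)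
    (uθ : H →L[ℂ] H) (huθ : ∀ n, uθ (e n) = θ ^ n • e n)

include hθ in
lemma fact_mul_conj : θ * (starRingEnd ℂ) θ = 1 := by
  have h1 : ‖θ‖ = 1 := hθ
  have hn : Complex.normSq θ = 1 := by rw [← Complex.sq_norm, h1]; norm_num
  rw [Complex.mul_conj, hn]; norm_num

include huθ in
lemma fact_adj_uθ : ∀ n, adjoint uθ (e n) = ((starRingEnd ℂ) θ) ^ n • e n := by
  intro n
  apply vext; intro m
  rw [adjoint_inner_left, huθ m, inner_smul_right, inner_smul_left, inner_e_e]
  by_cases h : m = n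
  · subst h; simp
  · simp [h]

include hs in
lemma fact_adj_s_zero : adjoint s (e 0) = 0 := by
  apply vext; intro m
  rw [adjoint_inner_left, hs m, inner_e_e, inner_zero_left]
  simp

include hs in
lemma fact_adj_s_succ : ∀ n, adjoint s (e (n + 1)) = e n := by
  intro n; apply vext; intro m
  rw [adjoint_inner_left, hs m, inner_e_e, inner_e_e]
  norm_num

end Body

set_option maxHeartbeats 2000000 in
/-- T_{ψ_θ}(x) = u_θ T_ψ(u_θ* x u_θ) u_θ*, where ψ_θ = ψ(v_θ* · v_θ) has
density matrix v_θ ρ v_θ*, and u_θ eₙ = θⁿ eₙ. -/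
theorem rotation_conjugation (α β : ℕ → ℝ) (hα0 : α 0 = 1)
    (hαβ : ∀ n, α n ^ 2 + β n ^ 2 = 1)
    (s a b : H →L[ℂ] H)
    (hs : ∀ n, s (e n) = e (n + 1))
    (ha : ∀ n, a (e n) = (α n : ℂ) • e n)
    (hb : ∀ n, b (e n) = (β n : ℂ) • e n)
    (u : Matrix (Fin 2) (Fin 2) (H →L[ℂ] H))
    (hu : u = !![adjoint s ∘L a ∘L s, Complex.I • (adjoint s ∘L b);
                 Complex.I • (b ∘L s), a])
    (ρ : Matrix (Fin 2) (Fin 2) ℂ) (hρpos : ρ.PosSemidef) (hρtr : ρ.trace = 1)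
    (θ : ℂ) (hθ : ‖θ‖ = 1)
    (uθ : H →L[ℂ] H) (huθ : ∀ n, uθ (e n) = θ ^ n • e n)
    (vθ : Matrix (Fin 2) (Fin 2) ℂ) (hvθ : vθ = !![1, 0; 0, (starRingEnd ℂ) θ]) :
    ∀ x : H →L[ℂ] H,
      transOp u (vθ * ρ * vθ.conjTranspose) x
        = uθ ∘L transOp u ρ (adjoint uθ ∘L x ∘L uθ) ∘L adjoint uθ := by
  intro x
  set c : ℂ := (starRingEnd ℂ) θ with hc
  have hθc : θ * c = 1 := fact_mul_conj θ hθ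
  have hcθ : c * θ = 1 := by rw [mul_comm]; exact hθc
  have hpow : ∀ n : ℕ, θ ^ n * c ^ n = 1 := fun n => by rw [← mul_pow, hθc, one_pow]
  have hstep : ∀ m : ℕ, c * θ ^ (m + 1) = θ ^ m := fun m => by
    rw [pow_succ, mul_comm (θ ^ m) θ, ← mul_assoc, hcθ, one_mul]
  have hadj : ∀ n, adjoint uθ (e n) = c ^ n • e n := fact_adj_uθ θ uθ huθ
  have hs0 : adjoint s (e 0) = 0 := fact_adj_s_zero s hs
  have hsn : ∀ n, adjoint s (e (n + 1)) = e n := fact_adj_s_succ s hs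
  have hUU : uθ * adjoint uθ = 1 := ext_e fun n => by
    rw [mul_apply_eq_comp, hadj n, map_smul, huθ n, smul_smul, one_apply_eq_self,
      mul_comm (c ^ n) (θ ^ n), hpow n, one_smul]
  have hcomm : ∀ k j : Fin 2, uθ * u k j = (θ ^ (k : ℕ) * c ^ (j : ℕ)) • (u k j * uθ) := by
    intro k j
    fin_cases k <;> fin_cases j <;>
      simp only [hu, Fin.zero_eta, Fin.mk_one, Matrix.cons_val', Matrix.cons_val_zero,
        Matrix.cons_val_one, Matrix.head_cons, Matrix.head_fin_const, Matrix.empty_val',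
        Matrix.cons_val_fin_one, Matrix.of_apply, Fin.isValue, Fin.val_zero, Fin.val_one, pow_zero, pow_one,
        one_mul, mul_one, one_smul]
    · -- (0,0)
      apply ext_e; intro n
      simp only [mul_apply_eq_comp, comp_apply, hs, ha, map_smul, hsn, huθ, smul_smul]
      module
    · -- (0,1)  scalar c
      apply ext_e; intro n
      cases n with
      | zero =>
        simp [mul_apply_eq_comp, smul_apply, comp_apply, hs0, huθ, hb, map_smul]
      | succ m =>
        simp only [mul_apply_eq_comp, smul_apply, comp_apply, hb, map_smul, hsn, huθ, smul_smul]
        match_scalars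
        first
        | linear_combination (Complex.I * (β (m + 1) : ℂ)) * hstep m
        | linear_combination (-(Complex.I) * (β (m + 1) : ℂ)) * hstep m
    · -- (1,0)  scalar θ
      apply ext_e; intro n
      simp only [mul_apply_eq_comp, smul_apply, comp_apply, hs, hb, map_smul, huθ, smul_smul]
      module
    · -- (1,1)  scalar θ * c
      rw [hθc, one_smul]
      apply ext_e; intro n
      simp only [mul_apply_eq_comp, ha, huθ, map_smul, smul_smul]
      module
  have hsand : ∀ k j : Fin 2, uθ * u k j * adjoint uθ = (θ ^ (k : ℕ) * c ^ (j : ℕ)) • u k j := by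
    intro k j
    rw [hcomm k j, smul_mul_assoc, mul_assoc, hUU, mul_one]
  have hsandA : ∀ k i : Fin 2,
      uθ * adjoint (u k i) * adjoint uθ = (c ^ (k : ℕ) * θ ^ (i : ℕ)) • adjoint (u k i) := by
    intro k i
    have h := congrArg star (hcomm k i)
    simp only [star_mul, star_smul, star_eq_adjoint, Complex.star_def, map_mul, map_pow,
      Complex.conj_conj, ← hc] at h
    have hcc : (starRingEnd ℂ) c = θ := by rw [hc]; exact Complex.conj_conj θ
    rw [mul_assoc, h, mul_smul_comm, ← mul_assoc, hUU, one_mul]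
    match_scalars
    rw [hcc]; ring
  have hentry : ∀ (y : H →L[ℂ] H) (i j : Fin 2),
      (u.conjTranspose * !![y, 0; 0, y] * u) i j
        = adjoint (u 0 i) * y * u 0 j + adjoint (u 1 i) * y * u 1 j := by
    intro y i j
    simp only [Matrix.mul_apply, Fin.sum_univ_two, Matrix.conjTranspose_apply,
      Matrix.cons_val', Matrix.cons_val_zero, Matrix.cons_val_one, Matrix.head_cons,
      Matrix.head_fin_const, Matrix.empty_val', Matrix.cons_val_fin_one, Matrix.of_apply, star_eq_adjoint,
      zero_mul, mul_zero, add_zero, zero_add, mul_assoc]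
  have hρ' : ∀ i j : Fin 2,
      (vθ * ρ * vθ.conjTranspose) j i = c ^ (j : ℕ) * θ ^ (i : ℕ) * ρ j i := by
    intro i j
    fin_cases i <;> fin_cases j <;>
      simp only [hvθ, Matrix.mul_apply, Fin.sum_univ_two, Matrix.conjTranspose_apply,
        Matrix.of_apply, Matrix.cons_val', Matrix.cons_val_zero, Matrix.cons_val_one,
        Matrix.head_cons, Matrix.head_fin_const, Matrix.empty_val', Matrix.cons_val_fin_one,
        Fin.zero_eta, Fin.mk_one, Fin.val_zero, Fin.val_one, pow_zero, pow_one,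
        Complex.star_def, map_one, map_zero, hc, Complex.conj_conj, star_zero, star_one] <;>
      ring
  have hterm : ∀ i j k : Fin 2,
      uθ * (adjoint (u k i) * (adjoint uθ * (x * uθ)) * u k j * adjoint uθ)
        = (θ ^ (i : ℕ) * c ^ (j : ℕ)) • (adjoint (u k i) * x * u k j) := by
    intro i j k
    have e1 : uθ * (adjoint (u k i) * (adjoint uθ * (x * uθ)) * u k j * adjoint uθ)
        = (uθ * adjoint (u k i) * adjoint uθ) * x * (uθ * u k j * adjoint uθ) := by
      simp only [mul_assoc]
    rw [e1, hsandA k i, hsand k j, smul_mul_assoc, smul_mul_assoc, mul_smul_comm, smul_smul]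
    match_scalars
    linear_combination (θ ^ (i : ℕ) * c ^ (j : ℕ)) * hpow (k : ℕ)
  simp only [transOp, ← ContinuousLinearMap.mul_def]
  simp only [Finset.mul_sum, Finset.sum_mul, mul_smul_comm, smul_mul_assoc]
  refine Finset.sum_congr rfl fun i _ => Finset.sum_congr rfl fun j _ => ?_
  rw [hentry, hentry, hρ' i j, add_mul, mul_add, hterm i j 0, hterm i j 1, ← smul_add, smul_smul]
  module
end
end

section
/- Let ψ be a diagonal state on M₂ with parameter 0 ≤ λ < 1/2 (ζ = 0). Define ρ = ((1−2λ)/(1−λ)) · diag(1, λ/(1−λ), (λ/(1−λ))², …), a positive trace-class diagonal operator with trace 1. Then ρ satisfies λ s*a s ρ s* a s + λ b s ρ s* b + (1−λ) s* b ρ b s + (1−λ) a ρ a = ρ, where a, b are diagonal with a²+b²=1, α₀=1; hence φ = Tr(ρ ·) is an invariant normal state for T_ψ. -/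
noncomputable section
open ContinuousLinearMap

def B : HilbertBasis ℕ ℂ H := HilbertBasis.ofRepr (LinearIsometryEquiv.refl ℂ H)

lemma B_eq (n : ℕ) : B n = e n := (B.repr_symm_single n).symm.trans rfl

lemma inner_e (i j : ℕ) : (inner ℂ (e i) (e j) : ℂ) = if i = j then 1 else 0 := by
  rw [show (e i) = lp.single 2 i (1:ℂ) from rfl,
    lp.inner_single_left (𝕜 := ℂ)]
  simp [e, lp.single_apply, Pi.single_apply, eq_comm]

lemma ext_inner_e {x y : H} (h : ∀ i, (inner ℂ (e i) x : ℂ) = inner ℂ (e i) y) : x = y := by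
  apply B.repr.injective
  ext i
  rw [B.repr_apply_apply, B.repr_apply_apply, B_eq]
  exact h i

set_option maxHeartbeats 2000000 in
/-- for a diagonal state ψ with 0 ≤ λ < 1/2, the diagonal operator
ρ = ((1−2λ)/(1−λ)) diag(1, λ/(1−λ), (λ/(1−λ))², …) satisfies the fixed point equation
λ s*as ρ s*as + λ bs ρ s*b + (1−λ) s*b ρ bs + (1−λ) a ρ a = ρ, i.e. Tr(ρ ·) is an
invariant normal state for T_ψ. -/
theorem diagonal_invariant_state (α β : ℕ → ℝ) (hα0 : α 0 = 1) (hβ0 : β 0 = 0)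
    (hαβ : ∀ n, α n ^ 2 + β n ^ 2 = 1) (hβ : ∀ n, 1 ≤ n → β n ≠ 0)
    (s a b : H →L[ℂ] H)
    (hs : ∀ n, s (e n) = e (n + 1))
    (ha : ∀ n, a (e n) = (α n : ℂ) • e n)
    (hb : ∀ n, b (e n) = (β n : ℂ) • e n)
    (l : ℝ) (hl0 : 0 ≤ l) (hl1 : l < 1 / 2)
    (ρ : H →L[ℂ] H)
    (hρ : ∀ n, ρ (e n) = (((1 - 2 * l) / (1 - l) * (l / (1 - l)) ^ n : ℝ) : ℂ) • e n) :
    (l : ℂ) • ((adjoint s ∘L a ∘L s) ∘L ρ ∘L (adjoint s ∘L a ∘L s))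
      + (l : ℂ) • ((b ∘L s) ∘L ρ ∘L (adjoint s ∘L b))
      + ((1 - l : ℝ) : ℂ) • ((adjoint s ∘L b) ∘L ρ ∘L (b ∘L s))
      + ((1 - l : ℝ) : ℂ) • (a ∘L ρ ∘L a) = ρ := by
  have hl : (1 : ℝ) - l ≠ 0 := by linarith
  -- adjoint of shift
  have hadj : ∀ m, adjoint s (e m) = if m = 0 then 0 else e (m - 1) := by
    intro m
    apply ext_inner_e
    intro i
    rw [adjoint_inner_right, hs i, inner_e]
    rcases m with _ | m
    · simp
    · simp only [Nat.succ_ne_zero, if_false, Nat.succ_sub_one, inner_e]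
      by_cases h : i = m <;> simp [h]
  have hadj0 : adjoint s (e 0) = 0 := by simpa using hadj 0
  have hadjS : ∀ m, adjoint s (e (m + 1)) = e m := by intro m; simpa using hadj (m + 1)
  -- ext on dense span of basis
  have hd : Dense (Submodule.span ℂ (Set.range fun i => B i) : Set H) :=
    Submodule.dense_iff_topologicalClosure_eq_top.mpr B.dense_span
  apply ContinuousLinearMap.ext_on hd
  rintro x ⟨n, rfl⟩
  rw [show (fun i => B i) n = e n from B_eq n]
  set r : ℕ → ℝ := fun n => (1 - 2 * l) / (1 - l) * (l / (1 - l)) ^ n with hr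
  simp only [ContinuousLinearMap.add_apply, ContinuousLinearMap.smul_apply,
    ContinuousLinearMap.comp_apply]
  have hB : ∀ m, (β m : ℝ) ^ 2 = 1 - α m ^ 2 := fun m => by linarith [hαβ m]
  rcases n with _ | n
  · simp only [map_smul, hs, ha, hb, hρ, hadj0, hadjS, hβ0, hα0, smul_smul, smul_zero,
      map_zero, Complex.ofReal_zero, zero_smul, mul_zero, zero_mul, add_zero, zero_add]
    rw [show (e 0 : H) = (1:ℂ) • e 0 by rw [one_smul]]
    simp only [smul_smul, ← add_smul]
    congr 1
    norm_cast
    set q : ℝ := l / (1 - l) with hqdef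
    set c : ℝ := (1 - 2 * l) / (1 - l) with hcdef
    have hq : (1 - l) * q = l := by rw [hqdef]; field_simp
    linear_combination ((1-l)*c*q) * hαβ 1 + (c*(1 - α 1 ^ 2)) * hq
  · simp only [map_smul, hs, ha, hb, hρ, hadjS, smul_smul]
    rw [show (e (n+1) : H) = (1:ℂ) • e (n+1) by rw [one_smul]]
    simp only [smul_smul, ← add_smul]
    congr 1
    norm_cast
    set q : ℝ := l / (1 - l) with hqdef
    set c : ℝ := (1 - 2 * l) / (1 - l) with hcdef
    have hq : (1 - l) * q = l := by rw [hqdef]; field_simp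
    linear_combination (l*c*q^n) * hαβ (n+1) + ((1-l)*c*q^(n+2)) * hαβ (n+1+1)
      + (c*q^n*(α (n+1)^2 - q * α (n+1+1)^2 + q - 1)) * hq
end
end

section
/- Let ψ be a diagonal state on M₂ with parameter λ ≥ 1/2 (ζ = 0). Then the transition operator T_ψ admits no invariant normal state: there is no positive trace-class operator ρ with trace 1 on ℓ²(ℕ) such that Tr(ρ T_ψ(x)) = Tr(ρ x) for all bounded x. -/
noncomputable section
open ContinuousLinearMap
lemma e_apply (n k : ℕ) : (e n : ∀ _ : ℕ, ℂ) k = if k = n then 1 else 0 := by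
  rcases eq_or_ne k n with h|h
  · subst h; simp [e, lp.single_apply_self]
  · simp [e, lp.single_apply_ne _ _ _ h, h]

lemma inner_e_s11 (v : H) (k : ℕ) : (inner ℂ (e k) v : ℂ) = v k := by
  rw [e, lp.inner_single_left]; simp [RCLike.inner_apply]

lemma inner_e_e_s11 (j k : ℕ) : (inner ℂ (e j) (e k) : ℂ) = if j = k then 1 else 0 := by
  rw [inner_e_s11, e_apply]

lemma H_ext {v w : H} (h : ∀ k, (inner ℂ (e k) v : ℂ) = inner ℂ (e k) w) : v = w := by
  refine lp.ext (funext fun k => ?_)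
  have := h k; rwa [inner_e_s11, inner_e_s11] at this

lemma hasSum_coord_sq (v : H) :
    HasSum (fun k => ‖(inner ℂ (e k) v : ℂ)‖ ^ 2) (‖v‖ ^ 2) := by
  have h := lp.hasSum_norm (p := 2) (by norm_num) v
  simp only [ENNReal.toReal_ofNat] at h
  rw [show ((2:ℝ)) = ((2:ℕ):ℝ) by norm_num] at h
  simp only [Real.rpow_natCast] at h
  simpa [inner_e_s11] using h

lemma norm_e (k : ℕ) : ‖e k‖ = 1 := by
  have h := (hasSum_coord_sq (e k)).tsum_eq
  have : (∑' j, ‖(inner ℂ (e j) (e k) : ℂ)‖ ^ 2) = 1 := by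
    simp only [inner_e_e_s11]
    rw [tsum_eq_single k (by intro j hj; simp [hj])]
    simp
  rw [this] at h
  nlinarith [norm_nonneg (e k)]

set_option maxHeartbeats 2000000 in
/-- for a diagonal state ψ with λ ≥ 1/2 the transition operator
T_ψ(x) = λ(s*as x s*as + s*b x bs) + (1−λ)(bs x s*b + a x a) admits no invariant normal
state.  A normal state on B(ℓ²(ℕ)) is represented (via the spectral decomposition of its
density operator) as x ↦ Σₙ ⟨ξₙ, x ξₙ⟩ with Σₙ ‖ξₙ‖² = 1. -/
theorem no_invariant_normal_state (α β : ℕ → ℝ) (hα0 : α 0 = 1) (hβ0 : β 0 = 0)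
    (hαβ : ∀ n, α n ^ 2 + β n ^ 2 = 1) (hβ : ∀ n, 1 ≤ n → β n ≠ 0)
    (s a b : H →L[ℂ] H)
    (hs : ∀ n, s (e n) = e (n + 1))
    (ha : ∀ n, a (e n) = (α n : ℂ) • e n)
    (hb : ∀ n, b (e n) = (β n : ℂ) • e n)
    (l : ℝ) (hl0 : 1 / 2 ≤ l) (hl1 : l ≤ 1) :
    ¬ ∃ ξ : ℕ → H, (∑' n, ‖ξ n‖ ^ 2) = 1 ∧
      ∀ x : H →L[ℂ] H,
        (∑' n, (inner ℂ (ξ n)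
          (((l : ℂ) • ((adjoint s ∘L a ∘L s) ∘L x ∘L (adjoint s ∘L a ∘L s)
              + (adjoint s ∘L b) ∘L x ∘L (b ∘L s))
            + ((1 - l : ℝ) : ℂ) • ((b ∘L s) ∘L x ∘L (adjoint s ∘L b) + a ∘L x ∘L a))
            (ξ n)) : ℂ))
        = ∑' n, (inner ℂ (ξ n) (x (ξ n)) : ℂ) := by
  rintro ⟨ξ, hsum, hinv⟩
  -- adjoints on basis vectors
  have hs_adj : ∀ k, adjoint s (e (k+1)) = e k := by
    intro k
    refine H_ext fun j => ?_
    rw [adjoint_inner_right, hs, inner_e_e_s11, inner_e_e_s11]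
    simp
  have hs_adj0 : adjoint s (e 0) = 0 := by
    refine H_ext fun j => ?_
    rw [adjoint_inner_right, hs, inner_e_e_s11]
    simp
  have ha_adj : ∀ k, adjoint a (e k) = (α k : ℂ) • e k := by
    intro k
    refine H_ext fun j => ?_
    rw [adjoint_inner_right, ha, inner_smul_left, inner_smul_right, inner_e_e_s11]
    rcases eq_or_ne j k with h|h <;> simp [h]
  have hb_adj : ∀ k, adjoint b (e k) = (β k : ℂ) • e k := by
    intro k
    refine H_ext fun j => ?_
    rw [adjoint_inner_right, hb, inner_smul_left, inner_smul_right, inner_e_e_s11]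
    rcases eq_or_ne j k with h|h <;> simp [h]
  -- coordinate formulas for operators applied to arbitrary vectors
  have hAv : ∀ (k : ℕ) (v : H), (inner ℂ (e k) (a v) : ℂ) = (α k : ℂ) * inner ℂ (e k) v := by
    intro k v
    rw [← adjoint_inner_left, ha_adj, inner_smul_left]
    simp
  have hBv : ∀ (k : ℕ) (v : H), (inner ℂ (e k) (b v) : ℂ) = (β k : ℂ) * inner ℂ (e k) v := by
    intro k v
    rw [← adjoint_inner_left, hb_adj, inner_smul_left]
    simp
  have hSv1 : ∀ (k : ℕ) (v : H), (inner ℂ (e (k+1)) (s v) : ℂ) = inner ℂ (e k) v := by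
    intro k v
    rw [← adjoint_inner_left, hs_adj]
  have hSv0 : ∀ v : H, (inner ℂ (e 0) (s v) : ℂ) = 0 := by
    intro v
    rw [← adjoint_inner_left, hs_adj0, inner_zero_left]
  have hS'v : ∀ (k : ℕ) (v : H), (inner ℂ (e k) (adjoint s v) : ℂ) = inner ℂ (e (k+1)) v := by
    intro k v
    rw [adjoint_inner_right, hs]
  -- the density coefficients
  set q : ℕ → ℕ → ℝ := fun k n => ‖(inner ℂ (e k) (ξ n) : ℂ)‖ ^ 2 with hq_def
  set p : ℕ → ℝ := fun k => ∑' n, q k n with hp_def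
  have hg : Summable (fun n => ‖ξ n‖ ^ 2) := by
    by_contra h
    rw [tsum_eq_zero_of_not_summable h] at hsum
    norm_num at hsum
  have hqnn : ∀ k n, 0 ≤ q k n := fun k n => sq_nonneg _
  have hqle : ∀ k n, q k n ≤ ‖ξ n‖ ^ 2 := by
    intro k n
    have h1 : ‖(inner ℂ (e k) (ξ n) : ℂ)‖ ≤ ‖e k‖ * ‖ξ n‖ := norm_inner_le_norm _ _
    rw [norm_e, one_mul] at h1
    have h2 := norm_nonneg (inner ℂ (e k) (ξ n) : ℂ)
    simp only [hq_def]
    exact pow_le_pow_left₀ h2 h1 2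
  have hq : ∀ k, Summable (q k) := fun k =>
    Summable.of_nonneg_of_le (hqnn k) (hqle k) hg
  have hp0 : ∀ k, 0 ≤ p k := fun k => tsum_nonneg (hqnn k)
  have hrow : ∀ n, HasSum (fun k => q k n) (‖ξ n‖ ^ 2) := fun n => hasSum_coord_sq (ξ n)
  have huq : Summable (Function.uncurry fun n k => q k n) := by
    refine (summable_prod_of_nonneg ?_).mpr ⟨fun n => (hrow n).summable, ?_⟩
    · intro z; exact hqnn z.2 z.1
    · simpa [fun n => (hrow n).tsum_eq] using hg
  have huq2 : Summable (Function.uncurry fun k n => q k n) := huq.prod_symm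
  have hpsum : Summable p := by
    have h := (summable_prod_of_nonneg (f := Function.uncurry fun k n => q k n) ?_).mp huq2
    · exact h.2
    · intro z; exact hqnn z.1 z.2
  have hptot : ∑' k, p k = 1 := by
    have hswap : ∑' k, ∑' n, q k n = ∑' n, ∑' k, q k n :=
      Summable.tsum_comm (f := fun n k => q k n) huq
    rw [hp_def]
    simp only [hswap]
    rw [tsum_congr (fun n => (hrow n).tsum_eq)]
    exact hsum
  -- the key balance equation
  have key : ∀ m : ℕ,
      l * ((α (m+1))^2 * p m + (β m)^2 * p (m-1))
        + (1-l) * ((β (m+1))^2 * p (m+1) + (α m)^2 * p m) = p m := by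
    intro m
    set Pm : H →L[ℂ] H := (innerSL ℂ (e m)).smulRight (e m) with hPm_def
    have hPm : ∀ w : H, Pm w = (inner ℂ (e m) w : ℂ) • e m := by
      intro w; simp [hPm_def]
    have hx := hinv Pm
    -- pointwise identity for the right-hand side
    have hRpt : ∀ n, (inner ℂ (ξ n) (Pm (ξ n)) : ℂ) = ((q m n : ℝ) : ℂ) := by
      intro n
      rw [hPm, inner_smul_right, ← inner_conj_symm (ξ n) (e m), Complex.mul_conj']
      simp only [hq_def]
      push_cast
      ring
    -- pointwise identity for the left-hand side
    have hLpt : ∀ n, (inner ℂ (ξ n)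
        (((l : ℂ) • ((adjoint s ∘L a ∘L s) ∘L Pm ∘L (adjoint s ∘L a ∘L s)
            + (adjoint s ∘L b) ∘L Pm ∘L (b ∘L s))
          + ((1 - l : ℝ) : ℂ) • ((b ∘L s) ∘L Pm ∘L (adjoint s ∘L b) + a ∘L Pm ∘L a))
          (ξ n)) : ℂ)
        = (((l * ((α (m+1))^2 * q m n + (β m)^2 * q (m-1) n)
            + (1-l) * ((β (m+1))^2 * q (m+1) n + (α m)^2 * q m n) : ℝ)) : ℂ) := by
      intro n
      set v := ξ n with hv
      -- the four coefficient computations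
      have c1 : (inner ℂ (e m) ((adjoint s) (a (s v))) : ℂ) = (α (m+1) : ℂ) * inner ℂ (e m) v := by
        rw [hS'v, hAv, hSv1]
      have d1 : (adjoint s) (a (s (e m))) = ((α (m+1) : ℝ) : ℂ) • e m := by
        rw [hs, ha, map_smul, hs_adj]
      have c2 : (inner ℂ (e m) (b (s v)) : ℂ) = (β m : ℂ) * inner ℂ (e (m-1)) v := by
        rcases m with _|k
        · rw [hBv, hSv0, hβ0]; simp
        · rw [hBv, hSv1]; simp
      have d2 : (adjoint s) (b (e m)) = ((β m : ℝ) : ℂ) • e (m-1) := by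
        rcases m with _|k
        · rw [hb, map_smul, hs_adj0, hβ0]; simp
        · rw [hb, map_smul, hs_adj]; simp
      have c3 : (inner ℂ (e m) ((adjoint s) (b v)) : ℂ) = (β (m+1) : ℂ) * inner ℂ (e (m+1)) v := by
        rw [hS'v, hBv]
      have d3 : b (s (e m)) = ((β (m+1) : ℝ) : ℂ) • e (m+1) := by
        rw [hs, hb]
      have c4 : (inner ℂ (e m) (a v) : ℂ) = (α m : ℂ) * inner ℂ (e m) v := hAv m v
      have d4 : a (e m) = ((α m : ℝ) : ℂ) • e m := ha m
      simp only [add_apply, smul_apply, comp_apply, inner_add_right, inner_smul_right, hPm,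
        map_smul, c1, c2, c3, c4, d1, d2, d3, d4, smul_smul]
      rw [← inner_conj_symm v (e m), ← inner_conj_symm v (e (m-1)), ← inner_conj_symm v (e (m+1))]
      simp only [hq_def, ← hv]
      push_cast
      linear_combination (l * (α (m+1))^2) * Complex.mul_conj' (inner ℂ (e m) v)
        + (l * (β m)^2) * Complex.mul_conj' (inner ℂ (e (m-1)) v)
        + ((1-l) * (β (m+1))^2) * Complex.mul_conj' (inner ℂ (e (m+1)) v)
        + ((1-l) * (α m)^2) * Complex.mul_conj' (inner ℂ (e m) v)
    rw [tsum_congr hLpt, tsum_congr hRpt, ← Complex.ofReal_tsum, ← Complex.ofReal_tsum] at hx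
    have hx' := Complex.ofReal_injective hx
    have hHS : HasSum (fun n => l * ((α (m+1))^2 * q m n + (β m)^2 * q (m-1) n)
        + (1-l) * ((β (m+1))^2 * q (m+1) n + (α m)^2 * q m n))
        (l * ((α (m+1))^2 * p m + (β m)^2 * p (m-1))
          + (1-l) * ((β (m+1))^2 * p (m+1) + (α m)^2 * p m)) := by
      exact ((((hq m).hasSum.mul_left _).add ((hq (m-1)).hasSum.mul_left _)).mul_left l).add
        ((((hq (m+1)).hasSum.mul_left _).add ((hq m).hasSum.mul_left _)).mul_left (1-l))
    rw [hHS.tsum_eq] at hx'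
    exact hx'
  -- recursion
  have hrecur : ∀ m : ℕ, (β (m+1))^2 * ((1-l) * p (m+1) - l * p m)
      = (β m)^2 * ((1-l) * p m - l * p (m-1)) := by
    intro m
    have h1 : (α (m+1))^2 = 1 - (β (m+1))^2 := by linarith [hαβ (m+1)]
    have h2 : (α m)^2 = 1 - (β m)^2 := by linarith [hαβ m]
    have k := key m
    rw [h1, h2] at k
    linear_combination k
  have zero : ∀ m : ℕ, (β (m+1))^2 * ((1-l) * p (m+1) - l * p m) = 0 := by
    intro m
    induction m with
    | zero => rw [hrecur 0, hβ0]; ring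
    | succ k ih => rw [hrecur (k+1)]; simpa using ih
  have hrec : ∀ m : ℕ, (1-l) * p (m+1) = l * p m := by
    intro m
    have h := zero m
    have hb1 : (β (m+1))^2 ≠ 0 := pow_ne_zero 2 (hβ (m+1) (by omega))
    have := (mul_eq_zero.mp h).resolve_left hb1
    linarith
  -- all p m vanish
  have hpzero : ∀ m, p m = 0 := by
    rcases eq_or_lt_of_le hl1 with heq | hlt
    · intro m
      have h := hrec m
      rw [heq] at h
      simpa using h.symm
    · have h1l : 0 < 1 - l := by linarith
      have mono : ∀ m, p m ≤ p (m+1) := by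
        intro m
        have h := hrec m
        have : (1-l) * p m ≤ (1-l) * p (m+1) := by
          rw [h]; nlinarith [hp0 m]
        exact le_of_mul_le_mul_left this h1l
      have ge0 : ∀ m, p 0 ≤ p m := by
        intro m
        induction m with
        | zero => exact le_refl _
        | succ k ih => exact ih.trans (mono k)
      have htend := hpsum.tendsto_atTop_zero
      have hp0le : p 0 ≤ 0 := ge_of_tendsto' htend ge0
      have hp00 : p 0 = 0 := le_antisymm hp0le (hp0 0)
      intro m
      induction m with
      | zero => exact hp00
      | succ k ih =>
        have h := hrec k
        rw [ih, mul_zero] at h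
        have := mul_eq_zero.mp h
        rcases this with h'|h'
        · linarith
        · exact h'
  rw [tsum_congr hpzero, tsum_zero] at hptot
  norm_num at hptot
end
end
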